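/- Let T be a compact positive operator on a separable complex Hilbert space H, with spectral decomposition Tf = Σ_j λ_j ⟨f, e_j⟩ e_j where {e_j} is orthonormal and λ_j ↓ 0. If 0 < p < 1 and {f_k} is an orthonormal basis of H with Σ_k ⟨T f_k, f_k⟩^p < ∞, then Σ_j λ_j^p < ∞, i.e. T belongs to the Schatten class S_p. -/

import Mathlib

open scoped InnerProductSpace

open MeasureTheory in
/-- Hölder-type inequality for `tsum`s over `ℕ` in `ℝ≥0∞`:
`∑ f^p * g^q ≤ (∑ f)^p * (∑ g)^q` when `p + q = 1`. -/
lemma tsum_mul_pow_le_aux {f g : ℕ → ENNReal} {p q : ℝ} (hp : 0 ≤ p) (hq : 0 ≤ q)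
    (hpq : p + q = 1) :
    ∑' j, f j ^ p * g j ^ q ≤ (∑' j, f j) ^ p * (∑' j, g j) ^ q := by
  have h := ENNReal.lintegral_mul_norm_pow_le (μ := (Measure.count : Measure ℕ))
    (f := f) (g := g) (measurable_of_countable f).aemeasurable
    (measurable_of_countable g).aemeasurable hp hq hpq
  simpa only [MeasureTheory.lintegral_count] using h

open Complex in
/-- `⟪u,v⟫ ⟪v,u⟫ = ‖⟪u,v⟫‖²` in `ℂ`. -/
lemma inner_mul_inner_symm_aux {H : Type*} [NormedAddCommGroup H] [InnerProductSpace ℂ H]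
    (u v : H) : ⟪u, v⟫_ℂ * ⟪v, u⟫_ℂ = ((‖⟪u, v⟫_ℂ‖ ^ 2 : ℝ) : ℂ) := by
  rw [← inner_conj_symm v u, Complex.mul_conj]
  norm_cast
  rw [Complex.normSq_eq_norm_sq]

/-- If `T` is a compact positive operator on a separable complex Hilbert space with spectral
decomposition `T f = Σ_j λ_j ⟨f, e_j⟩ e_j` (`{e_j}` orthonormal, `λ_j ≥ 0` decreasing to `0`),
`0 < p < 1`, and `{f_k}` is an orthonormal basis with `Σ_k ⟨T f_k, f_k⟩ ^ p < ∞`, then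
`Σ_j λ_j ^ p < ∞`, i.e. `T` belongs to the Schatten class `S_p`. -/
theorem schatten_of_summable_diag_pow
    {H : Type*} [NormedAddCommGroup H] [InnerProductSpace ℂ H] [CompleteSpace H]
    [TopologicalSpace.SeparableSpace H]
    (T : H →L[ℂ] H) (hTcompact : IsCompactOperator T) (hTpos : 0 ≤ T)
    (lam : ℕ → ℝ) (e : ℕ → H) (he : Orthonormal ℂ e)
    (hlam_nonneg : ∀ j, 0 ≤ lam j) (hlam_anti : Antitone lam)
    (hlam_lim : Filter.Tendsto lam Filter.atTop (nhds 0))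
    (hT : ∀ f : H, T f = ∑' j, (lam j : ℂ) • (⟪e j, f⟫_ℂ • e j))
    (p : ℝ) (hp0 : 0 < p) (hp1 : p < 1)
    (f : HilbertBasis ℕ ℂ H)
    (hsum : Summable (fun k => (⟪T (f k), f k⟫_ℂ).re ^ p)) :
    Summable (fun j => lam j ^ p) := by
  classical
  -- diagonal entries
  set d : ℕ → ℝ := fun k => (⟪T (f k), f k⟫_ℂ).re with hd_def
  -- Step 1: for every `k`, `d k = ∑_j lam j * ‖⟪e j, f k⟫‖²` as a `HasSum`.
  have hdiag : ∀ k : ℕ, HasSum (fun j => lam j * ‖⟪e j, (f k : H)⟫_ℂ‖ ^ 2) (d k) := by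
    intro k
    set y : H := (f k : H) with hy
    -- summability of the vector-valued series
    have hvec : Summable (fun j => (lam j : ℂ) • (⟪e j, y⟫_ℂ • e j)) := by
      have h1 : Summable (fun j => ‖(lam j : ℂ) * ⟪e j, y⟫_ℂ‖ ^ 2) := by
        have hb : Summable (fun j => ‖⟪e j, y⟫_ℂ‖ ^ 2) :=
          Orthonormal.inner_products_summable y he
        refine Summable.of_nonneg_of_le (fun j => sq_nonneg _) ?_ (hb.mul_left (lam 0 ^ 2))
        intro j
        rw [norm_mul, mul_pow, Complex.norm_real, Real.norm_eq_abs,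
          abs_of_nonneg (hlam_nonneg j)]
        have h01 : lam j ≤ lam 0 := hlam_anti (Nat.zero_le j)
        gcongr
        exact hlam_nonneg j
      have h2 := (he.orthogonalFamily.summable_iff_norm_sq_summable
        (fun j => (lam j : ℂ) * ⟪e j, y⟫_ℂ)).2 h1
      convert h2 using 2 with j
      simp [LinearIsometry.toSpanSingleton_apply, smul_smul]
    have hTsum : HasSum (fun j => (lam j : ℂ) • (⟪e j, y⟫_ℂ • e j)) (T y) := by
      rw [hT y]; exact hvec.hasSum
    have hinner := (innerSL ℂ y).hasSum hTsum
    have hterm : ∀ j, (innerSL ℂ y) ((lam j : ℂ) • (⟪e j, y⟫_ℂ • e j))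
        = ((lam j * ‖⟪e j, y⟫_ℂ‖ ^ 2 : ℝ) : ℂ) := by
      intro j
      simp only [innerSL_apply_apply, inner_smul_right]
      rw [inner_mul_inner_symm_aux (e j) y]
      push_cast
      ring
    simp only [hterm] at hinner
    have hre := Complex.reCLM.hasSum hinner
    simp only [Complex.reCLM_apply, Complex.ofReal_re] at hre
    have heq : d k = (⟪y, T y⟫_ℂ).re := by
      have h0 : d k = (⟪T y, y⟫_ℂ).re := rfl
      rw [h0, ← inner_conj_symm (T y) y, Complex.conj_re]
    rw [heq]
    exact hre
  have hdnn : ∀ k, 0 ≤ d k := fun k =>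
    (hdiag k).nonneg fun j => mul_nonneg (hlam_nonneg j) (sq_nonneg _)
  -- Step 2: Parseval, `∑_k ‖⟪e j, f k⟫‖² = 1`.
  have hpars : ∀ j : ℕ, HasSum (fun k => ‖⟪e j, (f k : H)⟫_ℂ‖ ^ 2) 1 := by
    intro j
    have h := f.hasSum_inner_mul_inner (e j) (e j)
    rw [inner_self_eq_norm_sq_to_K, he.1 j] at h
    simp only [one_pow, Complex.ofReal_one, RCLike.ofReal_one] at h
    have h2 : ∀ k : ℕ, ⟪e j, (f k : H)⟫_ℂ * ⟪(f k : H), e j⟫_ℂ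
        = ((‖⟪e j, (f k : H)⟫_ℂ‖ ^ 2 : ℝ) : ℂ) := fun k =>
      inner_mul_inner_symm_aux (e j) (f k)
    simp only [h2] at h
    have hre := Complex.reCLM.hasSum h
    simp only [Complex.reCLM_apply, Complex.ofReal_re] at hre
    convert hre using 1
    norm_num
  -- ENNReal versions
  set A : ℕ → ℕ → ENNReal := fun j k => ENNReal.ofReal (‖⟪e j, (f k : H)⟫_ℂ‖ ^ 2) with hA_def
  set L : ℕ → ENNReal := fun j => ENNReal.ofReal (lam j) with hL_def
  have hA1 : ∀ j, ∑' k, A j k = 1 := by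
    intro j
    rw [hA_def]
    rw [← ENNReal.ofReal_tsum_of_nonneg (fun k => sq_nonneg _) (hpars j).summable]
    rw [(hpars j).tsum_eq, ENNReal.ofReal_one]
  have hdA : ∀ k, ∑' j, L j * A j k = ENNReal.ofReal (d k) := by
    intro k
    have : ∀ j, L j * A j k = ENNReal.ofReal (lam j * ‖⟪e j, (f k : H)⟫_ℂ‖ ^ 2) := by
      intro j
      rw [hL_def, hA_def, ENNReal.ofReal_mul (hlam_nonneg j)]
    simp_rw [this]
    rw [← ENNReal.ofReal_tsum_of_nonneg
      (fun j => mul_nonneg (hlam_nonneg j) (sq_nonneg _)) (hdiag k).summable,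
      (hdiag k).tsum_eq]
  -- Step 3: Hölder per `k`.
  have key : ∀ k, ∑' j, L j ^ p * A j k ≤ ENNReal.ofReal (d k ^ p) := by
    intro k
    have hq0 : (0:ℝ) ≤ 1 - p := by linarith
    have hhold := tsum_mul_pow_le_aux (f := fun j => L j * A j k) (g := fun j => A j k)
      hp0.le hq0 (by ring)
    have hlhs : ∀ j, (L j * A j k) ^ p * A j k ^ (1 - p) = L j ^ p * A j k := by
      intro j
      rcases eq_or_ne (A j k) 0 with h0 | h0
      · rw [h0, ENNReal.zero_rpow_of_pos (by linarith), mul_zero, mul_zero]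
      · rw [ENNReal.mul_rpow_of_nonneg _ _ hp0.le, mul_assoc,
          ← ENNReal.rpow_add _ _ h0 (by simp [hA_def]), add_sub_cancel,
          ENNReal.rpow_one]
    have hbes : (∑' j, A j k) ≤ 1 := by
      have hb1 := he.tsum_inner_products_le ((f k : H))
      rw [f.orthonormal.1 k, one_pow] at hb1
      calc (∑' j, A j k) = ENNReal.ofReal (∑' j, ‖⟪e j, (f k : H)⟫_ℂ‖ ^ 2) := by
            rw [ENNReal.ofReal_tsum_of_nonneg (fun j => sq_nonneg _)
              (Orthonormal.inner_products_summable _ he)]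
        _ ≤ ENNReal.ofReal 1 := ENNReal.ofReal_le_ofReal hb1
        _ = 1 := ENNReal.ofReal_one
    calc ∑' j, L j ^ p * A j k = ∑' j, (L j * A j k) ^ p * A j k ^ (1 - p) := by
          simp_rw [hlhs]
      _ ≤ (∑' j, L j * A j k) ^ p * (∑' j, A j k) ^ (1 - p) := hhold
      _ ≤ (∑' j, L j * A j k) ^ p * 1 := by
          gcongr
          calc (∑' j, A j k) ^ (1 - p) ≤ (1 : ENNReal) ^ (1 - p) :=
                ENNReal.rpow_le_rpow hbes hq0
            _ = 1 := ENNReal.one_rpow _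
      _ = ENNReal.ofReal (d k ^ p) := by
          rw [mul_one, hdA k, ← ENNReal.ofReal_rpow_of_nonneg (hdnn k) hp0.le]
  -- Step 4: sum over k and conclude.
  have hfin : ∑' j, L j ^ p ≠ ⊤ := by
    have h1 : ∑' j, L j ^ p = ∑' j, ∑' k, L j ^ p * A j k := by
      congr 1; funext j; rw [ENNReal.tsum_mul_left, hA1 j, mul_one]
    have h2 : ∑' (j : ℕ), ∑' (k : ℕ), L j ^ p * A j k
        = ∑' (k : ℕ), ∑' (j : ℕ), L j ^ p * A j k := ENNReal.tsum_comm
    have h3 : ∑' (k : ℕ), ∑' (j : ℕ), L j ^ p * A j k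
        ≤ ∑' k, ENNReal.ofReal (d k ^ p) := ENNReal.tsum_le_tsum key
    have h4 : ∑' k, ENNReal.ofReal (d k ^ p) = ENNReal.ofReal (∑' k, d k ^ p) := by
      rw [← ENNReal.ofReal_tsum_of_nonneg (fun k => Real.rpow_nonneg (hdnn k) p) hsum]
    rw [h1, h2]
    exact ne_top_of_le_ne_top (by rw [h4]; exact ENNReal.ofReal_ne_top) h3
  have := ENNReal.summable_toReal hfin
  refine this.congr fun j => ?_
  simp only [hL_def]
  rw [ENNReal.ofReal_rpow_of_nonneg (hlam_nonneg j) hp0.le,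
    ENNReal.toReal_ofReal (Real.rpow_nonneg (hlam_nonneg j) p)]
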